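/- Let S₁ be Rayleigh distributed with E[S₁²] = σ_{S₁}², let X ~ N(0,P) and N₁ ~ N(0,σ_{N₁}²), with S₁, X, N₁ independent and P, σ_{N₁}², σ_{S₁}² > 0. After normalizing so that σ_{S₁}² = σ_{N₁}² = 1, E_{S₁}[h(S₁X + N₁)] − h(N₁) = −(1/(2 ln 2))·exp(1/P)·Ei(−1/P), where h denotes differential entropy in bits and the expectation is over S₁ with X fixed to its Gaussian law inside h. -/

import Mathlib

open MeasureTheory Real Set

/-- The exponential integral Ei(z) = −∫_{−z}^∞ exp(−t)/t dt. -/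
noncomputable def expIntegralEi (z : ℝ) : ℝ := - ∫ t in Ioi (-z), Real.exp (-t) / t

/-- Differential entropy (in bits) of a Gaussian with variance v. -/
noncomputable def gaussEntropy (v : ℝ) : ℝ :=
  (1/2) * Real.logb 2 (2 * Real.pi * Real.exp 1 * v)

open Filter in
private lemma gaussEntropy_split {v : ℝ} (hv : 0 < v) :
    gaussEntropy v = gaussEntropy 1 + (1 / (2 * Real.log 2)) * Real.log v := by
  have hpi : (0:ℝ) < 2 * Real.pi * Real.exp 1 := by positivity
  unfold gaussEntropy
  rw [Real.logb, Real.logb, Real.log_mul hpi.ne' hv.ne', mul_one]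
  field_simp

open Filter in
private lemma integrable_log_part {P : ℝ} (hP : 0 < P) :
    IntegrableOn (fun u : ℝ => Real.exp (-u) * Real.log (1 + P * u)) (Ioi 0) := by
  have hg := Real.GammaIntegral_convergent (s := 2) (by norm_num)
  have hg' : IntegrableOn (fun u : ℝ => P * (Real.exp (-u) * u)) (Ioi 0) := by
    apply Integrable.const_mul
    apply hg.congr_fun ?_ measurableSet_Ioi
    intro x hx
    norm_num
  refine hg'.mono' ?_ ?_
  · exact ((Real.measurable_exp.comp measurable_neg).mul
      ((measurable_const.mul measurable_id).const_add 1).log).aestronglyMeasurable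
  · filter_upwards [ae_restrict_mem measurableSet_Ioi] with u hu
    have hu0 : (0:ℝ) < u := hu
    have h1 : (0:ℝ) ≤ Real.log (1 + P * u) :=
      Real.log_nonneg (by nlinarith)
    have h2 : Real.log (1 + P * u) ≤ P * u := by
      have := Real.log_le_sub_one_of_pos (show (0:ℝ) < 1 + P * u by nlinarith)
      linarith
    rw [Real.norm_eq_abs,
      abs_of_nonneg (by positivity : (0:ℝ) ≤ Real.exp (-u) * Real.log (1 + P * u))]
    have := Real.exp_pos (-u)
    nlinarith

open Filter in
private lemma integrable_frac_part {P : ℝ} (hP : 0 < P) :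
    IntegrableOn (fun u : ℝ => Real.exp (-u) * (P / (1 + P * u))) (Ioi 0) := by
  have hg : IntegrableOn (fun u : ℝ => P * Real.exp (-1 * u)) (Ioi 0) :=
    (exp_neg_integrableOn_Ioi 0 one_pos).const_mul P
  refine hg.mono' ?_ ?_
  · refine ((Real.measurable_exp.comp measurable_neg).mul
      (measurable_const.div ((measurable_const.mul measurable_id).const_add 1))).aestronglyMeasurable
  · filter_upwards [ae_restrict_mem measurableSet_Ioi] with u hu
    have hu0 : (0:ℝ) < u := hu
    have hd : (0:ℝ) < 1 + P * u := by nlinarith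
    have h1 : P / (1 + P * u) ≤ P := by
      rw [div_le_iff₀ hd]; nlinarith [mul_pos (mul_pos hP hP) hu0]
    have h2 : (0:ℝ) ≤ P / (1 + P * u) := by positivity
    rw [Real.norm_eq_abs, abs_of_nonneg (by positivity)]
    have := Real.exp_pos (-u)
    rw [neg_one_mul]
    nlinarith

open Filter in
private lemma parts_step {P : ℝ} (hP : 0 < P) :
    (∫ u in Ioi (0:ℝ), Real.exp (-u) * Real.log (1 + P * u))
      = ∫ u in Ioi (0:ℝ), Real.exp (-u) * (P / (1 + P * u)) := by
  have h1 := integrable_log_part hP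
  have h2 := integrable_frac_part hP
  set F : ℝ → ℝ := fun u => -(Real.exp (-u) * Real.log (1 + P * u)) with hF
  have hd : ∀ x ∈ Ioi (0:ℝ), HasDerivAt F
      (Real.exp (-x) * Real.log (1 + P * x) - Real.exp (-x) * (P / (1 + P * x))) x := by
    intro x hx
    have hx0 : (0:ℝ) < x := hx
    have hdenom : (0:ℝ) < 1 + P * x := by nlinarith
    have hexp : HasDerivAt (fun u : ℝ => Real.exp (-u)) (-Real.exp (-x)) x := by
      simpa [Function.comp_def] using (Real.hasDerivAt_exp (-x)).comp x (hasDerivAt_neg x)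
    have haff : HasDerivAt (fun u : ℝ => 1 + P * u) P x := by
      simpa using ((hasDerivAt_id x).const_mul P).const_add 1
    have hlog : HasDerivAt (fun u : ℝ => Real.log (1 + P * u)) (P / (1 + P * x)) x := by
      have := (Real.hasDerivAt_log hdenom.ne').comp x haff
      simpa [div_eq_mul_inv, mul_comm, Function.comp_def] using this
    have := (hexp.mul hlog).neg
    refine HasDerivAt.congr_deriv this ?_
    ring
  have htend : Tendsto F atTop (nhds 0) := by
    have hb : Tendsto (fun u : ℝ => P * (u * Real.exp (-u))) atTop (nhds 0) := by
      have := (Real.tendsto_pow_mul_exp_neg_atTop_nhds_zero 1).const_mul P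
      simpa using this
    apply squeeze_zero_norm' _ hb
    filter_upwards [eventually_gt_atTop (0:ℝ)] with u hu
    have hdenom : (0:ℝ) < 1 + P * u := by nlinarith
    have hl1 : (0:ℝ) ≤ Real.log (1 + P * u) := Real.log_nonneg (by nlinarith)
    have hl2 : Real.log (1 + P * u) ≤ P * u := by
      have := Real.log_le_sub_one_of_pos hdenom; linarith
    have he := Real.exp_pos (-u)
    rw [hF, norm_neg, Real.norm_eq_abs, abs_of_nonneg (by positivity)]
    nlinarith
  have hcont : ContinuousWithinAt F (Ici 0) 0 := by
    apply ContinuousAt.continuousWithinAt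
    apply ContinuousAt.neg
    apply ContinuousAt.mul
    · exact (Real.continuous_exp.comp continuous_neg).continuousAt
    · apply ContinuousAt.log
      · exact (continuous_const.add (continuous_const.mul continuous_id)).continuousAt
      · norm_num
  have key := integral_Ioi_of_hasDerivAt_of_tendsto hcont hd (h1.sub h2) htend
  rw [integral_sub h1 h2] at key
  have hF0 : F 0 = 0 := by simp [hF]
  rw [hF0] at key
  linarith

private lemma shift_Ioi (c : ℝ) (g : ℝ → ℝ) :
    (∫ t in Ioi c, g t) = ∫ u in Ioi (0:ℝ), g (u + c) := by
  rw [← integral_indicator measurableSet_Ioi, ← integral_indicator measurableSet_Ioi]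
  rw [← integral_add_right_eq_self (fun x => (Ioi c).indicator g x) c]
  congr 1
  ext x
  by_cases hx : 0 < x
  · rw [indicator_of_mem (by simpa using hx), indicator_of_mem (by simpa using hx)]
  · rw [indicator_of_notMem (by simpa using hx), indicator_of_notMem (by simpa using hx)]

open Filter in
private lemma rayleigh_norm : (∫ s in Ioi (0:ℝ), 2 * s * Real.exp (-(s^2))) = 1 := by
  have hd : ∀ x ∈ Ioi (0:ℝ), HasDerivAt (fun s : ℝ => -Real.exp (-(s^2)))
      (2 * x * Real.exp (-(x^2))) x := by
    intro x _
    have h1 : HasDerivAt (fun s : ℝ => -(s^2)) (-(2*x)) x := by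
      simpa using (hasDerivAt_pow 2 x).fun_neg
    have := (Real.hasDerivAt_exp (-(x^2))).comp x h1
    refine HasDerivAt.congr_deriv this.neg ?_
    ring
  have hint : IntegrableOn (fun s : ℝ => 2 * s * Real.exp (-(s^2))) (Ioi 0) := by
    have h := integrableOn_rpow_mul_exp_neg_mul_sq (b := 1) one_pos (s := 1) (by norm_num)
    have h' : IntegrableOn (fun s : ℝ => 2 * (s ^ (1:ℝ) * Real.exp (-1 * s^2))) (Ioi 0) :=
      h.const_mul 2
    apply h'.congr_fun ?_ measurableSet_Ioi
    intro x hx; simp only [Real.rpow_one]; ring_nf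
  have htend : Filter.Tendsto (fun s : ℝ => -Real.exp (-(s^2))) Filter.atTop (nhds 0) := by
    rw [show (0:ℝ) = -0 by norm_num]
    apply Filter.Tendsto.neg
    apply Real.tendsto_exp_atBot.comp
    apply Filter.tendsto_neg_atBot_iff.mpr
    exact tendsto_pow_atTop (by norm_num)
  have hcont : ContinuousWithinAt (fun s : ℝ => -Real.exp (-(s^2))) (Ici 0) 0 :=
    (Continuous.continuousAt (by continuity)).continuousWithinAt
  have := integral_Ioi_of_hasDerivAt_of_tendsto hcont hd hint htend
  rw [this]; norm_num

private lemma subst_step {P : ℝ} (hP : 0 < P) :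
    (∫ s in Ioi (0:ℝ), 2 * s * Real.exp (-(s^2)) * Real.log (1 + P * s^2))
      = ∫ u in Ioi (0:ℝ), Real.exp (-u) * Real.log (1 + P * u) := by
  have h := integral_comp_rpow_Ioi_of_pos
    (g := fun u : ℝ => Real.exp (-u) * Real.log (1 + P * u)) (p := 2) two_pos
  rw [← h]
  apply setIntegral_congr_fun measurableSet_Ioi
  intro x hx
  have h2 : x ^ (2:ℝ) = x ^ 2 := by
    rw [show (2:ℝ) = ((2:ℕ):ℝ) by norm_num, Real.rpow_natCast]
  simp only [smul_eq_mul, h2]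
  norm_num
  ring

private lemma integrable_s_log {P : ℝ} (hP : 0 < P) :
    IntegrableOn (fun s : ℝ => 2 * s * Real.exp (-(s^2)) * Real.log (1 + P * s^2)) (Ioi 0) := by
  have h := integrableOn_rpow_mul_exp_neg_mul_sq (b := 1) one_pos (s := 3) (by norm_num)
  have h' : IntegrableOn (fun s : ℝ => (2*P) * (s ^ (3:ℝ) * Real.exp (-1 * s^2))) (Ioi 0) :=
    h.const_mul (2*P)
  refine h'.mono' ?_ ?_
  · exact (((measurable_const.mul measurable_id).mul
      (Real.measurable_exp.comp (measurable_id.pow_const 2).neg)).mul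
      ((measurable_const.mul (measurable_id.pow_const 2)).const_add 1).log).aestronglyMeasurable
  · filter_upwards [ae_restrict_mem measurableSet_Ioi] with s hs
    have hs0 : (0:ℝ) < s := hs
    have hd : (0:ℝ) < 1 + P * s^2 := by positivity
    have hl1 : (0:ℝ) ≤ Real.log (1 + P * s^2) := Real.log_nonneg (by nlinarith)
    have hl2 : Real.log (1 + P * s^2) ≤ P * s^2 := by
      have := Real.log_le_sub_one_of_pos hd; linarith
    have he := Real.exp_pos (-(s^2))
    rw [Real.norm_eq_abs, abs_of_nonneg (by positivity)]
    rw [show s ^ (3:ℝ) = s ^ (3:ℕ) by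
      rw [show (3:ℝ) = ((3:ℕ):ℝ) by norm_num, Real.rpow_natCast],
      show (-1 : ℝ) * s^2 = -(s^2) by ring]
    have key : 2 * s * Real.exp (-(s^2)) * Real.log (1 + P * s^2)
        ≤ 2 * s * Real.exp (-(s^2)) * (P * s^2) :=
      mul_le_mul_of_nonneg_left hl2 (by positivity)
    calc 2 * s * Real.exp (-(s^2)) * Real.log (1 + P * s^2)
        ≤ 2 * s * Real.exp (-(s^2)) * (P * s^2) := key
      _ = 2 * P * (s ^ (3:ℕ) * Real.exp (-(s^2))) := by ring

/-- With σ_{S₁}² = σ_{N₁}² = 1: for S₁ Rayleigh (density 2s·exp(−s²), s ≥ 0),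
X ~ N(0,P), N₁ ~ N(0,1) independent, for fixed S₁ = s the variable sX + N₁ is
Gaussian with variance s²P + 1, and
E_{S₁}[h(S₁X + N₁)] − h(N₁) = −(1/(2 ln 2))·exp(1/P)·Ei(−1/P). -/
theorem expected_entropy_rayleigh_faded_gaussian (P : ℝ) (hP : 0 < P) :
    (∫ s in Ioi (0:ℝ), (2 * s * Real.exp (-(s^2))) * gaussEntropy (s^2 * P + 1))
        - gaussEntropy 1
      = -(1 / (2 * Real.log 2)) * Real.exp (1/P) * expIntegralEi (-(1/P)) := by
  have hlog2 : (0:ℝ) < Real.log 2 := Real.log_pos one_lt_two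
  set c : ℝ := 1 / (2 * Real.log 2) with hc
  -- step 1: rewrite the integrand
  have step1 : (∫ s in Ioi (0:ℝ), (2 * s * Real.exp (-(s^2))) * gaussEntropy (s^2 * P + 1))
      = ∫ s in Ioi (0:ℝ), (2 * s * Real.exp (-(s^2))) * gaussEntropy 1
          + c * (2 * s * Real.exp (-(s^2)) * Real.log (1 + P * s^2)) := by
    apply setIntegral_congr_fun measurableSet_Ioi
    intro s hs
    have hs0 : (0:ℝ) < s := hs
    have hv : (0:ℝ) < s^2 * P + 1 := by positivity
    dsimp only
    rw [gaussEntropy_split hv, show s^2 * P + 1 = 1 + P * s^2 by ring]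
    ring
  -- integrabilities
  have hray : IntegrableOn (fun s : ℝ => 2 * s * Real.exp (-(s^2))) (Ioi 0) := by
    have h := integrableOn_rpow_mul_exp_neg_mul_sq (b := 1) one_pos (s := 1) (by norm_num)
    have h' : IntegrableOn (fun s : ℝ => 2 * (s ^ (1:ℝ) * Real.exp (-1 * s^2))) (Ioi 0) :=
      h.const_mul 2
    apply h'.congr_fun ?_ measurableSet_Ioi
    intro x hx; simp only [Real.rpow_one]; ring_nf
  have hint1 : IntegrableOn (fun s : ℝ => (2 * s * Real.exp (-(s^2))) * gaussEntropy 1)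
      (Ioi 0) := hray.mul_const _
  have hint2 : IntegrableOn
      (fun s : ℝ => c * (2 * s * Real.exp (-(s^2)) * Real.log (1 + P * s^2))) (Ioi 0) :=
    (integrable_s_log hP).const_mul c
  rw [step1, integral_add hint1 hint2, integral_mul_const, integral_const_mul,
    rayleigh_norm, one_mul, subst_step hP, parts_step hP]
  -- now handle the right-hand side
  have hPinv : (0:ℝ) < 1/P := by positivity
  have hEi : expIntegralEi (-(1/P)) = - ∫ t in Ioi (1/P), Real.exp (-t) / t := by
    unfold expIntegralEi
    rw [neg_neg]
  rw [hEi, shift_Ioi (1/P) (fun t => Real.exp (-t) / t)]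
  have hfinal : Real.exp (1/P) * (∫ u in Ioi (0:ℝ), Real.exp (-(u + 1/P)) / (u + 1/P))
      = ∫ u in Ioi (0:ℝ), Real.exp (-u) * (P / (1 + P * u)) := by
    rw [← integral_const_mul]
    apply setIntegral_congr_fun measurableSet_Ioi
    intro u hu
    have hu0 : (0:ℝ) < u := hu
    have hd : (0:ℝ) < 1 + P * u := by nlinarith
    have hd2 : (0:ℝ) < u + 1/P := by positivity
    have e1 : Real.exp (1/P) * Real.exp (-(u + 1/P)) = Real.exp (-u) := by
      rw [← Real.exp_add]; congr 1; ring
    calc Real.exp (1/P) * (Real.exp (-(u + 1/P)) / (u + 1/P))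
        = (Real.exp (1/P) * Real.exp (-(u + 1/P))) / (u + 1/P) := by ring
      _ = Real.exp (-u) / (u + 1/P) := by rw [e1]
      _ = Real.exp (-u) * (P / (1 + P * u)) := by
          rw [mul_div_assoc']
          rw [div_eq_div_iff hd2.ne' hd.ne']
          field_simp
          ring
  rw [← hfinal]
  ring
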